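/- arXiv:0709.3415 — 2 statements merged into one kernel-verified Lean document; each statement's English description precedes it below -/
import Mathlib

section
/- Let A' and A be ℤ-graded rings with additive maps ∂' : A' → A' and ∂ : A → A, each squaring to zero and each satisfying the graded Leibniz rule for its grading, and let π : A' →+* A be a ring homomorphism with π ∘ ∂' = ∂ ∘ π. If the homology of (A', ∂') vanishes (every ∂'-cycle is a ∂'-boundary), then the homology of (A, ∂) vanishes (every ∂-cycle is a ∂-boundary). (This is the mechanism behind the implications (ii) ⇒ (i), (iii) ⇒ (i) and (n+iii) ⇒ (n) of the paper's main theorem.) -/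
/-- If `π : A' →+* A` is a ring homomorphism intertwining the differentials of
two ℤ-graded differential graded algebras, and the homology of `(A', d')`
vanishes, then the homology of `(A, d)` vanishes. -/
theorem homology_vanishes_of_chain_map {A' A : Type*} [Ring A'] [Ring A]
    (𝒜' : ℤ → AddSubgroup A') (𝒜 : ℤ → AddSubgroup A)
    [GradedRing 𝒜'] [GradedRing 𝒜]
    (d' : A' →+ A') (d : A →+ A)
    (hd'2 : ∀ x : A', d' (d' x) = 0) (hd2 : ∀ x : A, d (d x) = 0)
    (hLeib' : ∀ (i : ℤ) (a : A'), a ∈ 𝒜' i → ∀ b : A',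
      d' (a * b) = d' a * b + ((-1 : ℤˣ) ^ i) • (a * d' b))
    (hLeib : ∀ (i : ℤ) (a : A), a ∈ 𝒜 i → ∀ b : A,
      d (a * b) = d a * b + ((-1 : ℤˣ) ^ i) • (a * d b))
    (π : A' →+* A) (hchain : ∀ x : A', π (d' x) = d (π x))
    (hvan' : ∀ b : A', d' b = 0 → ∃ c : A', d' c = b) :
    ∀ b : A, d b = 0 → ∃ c : A, d c = b := by
  intro b hb
  -- d' 1 = 0
  have h1 : d' (1 : A') = 0 := by
    have := hLeib' 0 1 (SetLike.one_mem_graded 𝒜') 1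
    simp only [one_mul, mul_one, pow_zero, one_smul] at this
    have h2 : d' (1:A') = d' 1 + d' 1 := by simpa using this
    exact left_eq_add.mp h2
  obtain ⟨c', hc'⟩ := hvan' 1 h1
  set x : A := π c' with hx
  have hdx : d x = 1 := by rw [hx, ← hchain, hc', map_one]
  -- for any a, d (a * b) = d a * b, by grading induction
  have key : ∀ a : A, d (a * b) = d a * b := by
    intro a
    induction a using DirectSum.Decomposition.inductionOn 𝒜 with
    | zero => simp
    | homogeneous m =>
      rename_i i
      rw [hLeib i m.1 m.2 b, hb, mul_zero, smul_zero, add_zero]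
    | add u v hu hv => rw [add_mul, map_add, map_add, hu, hv, add_mul]
  exact ⟨x * b, by rw [key, hdx, one_mul]⟩
end

section
/- Let A be a ℤ-graded ring and ∂ : A → A an additive map with ∂ ∘ ∂ = 0 satisfying the graded Leibniz rule. If u is a unit of A (u : Aˣ) and f₀ ∈ A satisfies ∂(f₀) = u, then ∂(f₀ * ↑u⁻¹) = 1. (This is the paper's computation d(f₀·(1−g)⁻¹) = (1−g)·(1−g)⁻¹ = 1 with u = 1−g, which proves the implications (i) ⇒ (ii), (i) ⇒ (iii) and (n) ⇒ (n+iii) of the main theorem.) -/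
/-- In a ℤ-graded ring with a differential `d` (additive, `d ∘ d = 0`, graded
Leibniz rule), if `d f₀ = u` for a unit `u`, then `d (f₀ * ↑u⁻¹) = 1`. -/
theorem primitive_of_unit_from_primitive_of_invertible {A : Type*} [Ring A]
    (𝒜 : ℤ → AddSubgroup A) [GradedRing 𝒜] (d : A →+ A)
    (hd2 : ∀ x : A, d (d x) = 0)
    (hLeib : ∀ (i : ℤ) (a : A), a ∈ 𝒜 i → ∀ b : A,
      d (a * b) = d a * b + ((-1 : ℤˣ) ^ i) • (a * d b))
    (u : Aˣ) (f₀ : A) (hf₀ : d f₀ = (u : A)) :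
    d (f₀ * ((u⁻¹ : Aˣ) : A)) = 1 := by
  -- key: if d b = 0 then d (x * b) = d x * b for all x
  have key : ∀ b : A, d b = 0 → ∀ x : A, d (x * b) = d x * b := by
    intro b hb x
    induction x using DirectSum.Decomposition.inductionOn 𝒜 with
    | zero => simp
    | @homogeneous i a =>
        rw [hLeib i a a.2 b, hb, mul_zero, smul_zero, add_zero]
    | add x y hx hy =>
        rw [add_mul, map_add, hx, hy, map_add, add_mul]
  have hdu : d (u : A) = 0 := by rw [← hf₀]; exact hd2 f₀
  have h1 : d 1 = 0 := by
    have := hLeib 0 1 (SetLike.one_mem_graded 𝒜) 1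
    simp only [one_mul, zpow_zero, one_smul, mul_one] at this
    have : d 1 + d 1 = d 1 + 0 := by rw [add_zero, ← this]
    exact (add_left_cancel this)
  have hinv : d ((u⁻¹ : Aˣ) : A) = 0 := by
    have h0 : d (((u⁻¹ : Aˣ) : A) * (u : A)) = d ((u⁻¹ : Aˣ) : A) * (u : A) :=
      key _ hdu _
    rw [Units.inv_mul, h1] at h0
    calc d ((u⁻¹ : Aˣ) : A) = d ((u⁻¹ : Aˣ) : A) * (u : A) * ((u⁻¹ : Aˣ) : A) := by
          rw [mul_assoc, Units.mul_inv, mul_one]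
      _ = 0 := by rw [← h0, zero_mul]
  rw [key _ hinv f₀, hf₀, Units.mul_inv]
end
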